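/- For every k there is a map core from graphs on vertex set [k] to graphs on vertex set [k] with the following properties: (i) for every graph H, core(H) is a core of H; (ii) for every graph F in the image of core, |V(E(F))| ≤ 3·vc(F); and (iii) for every F in the image of core there exists an edge set E*_F ⊆ V(E(F)) × ([k] ∖ V(E(F))) such that for every graph H, core(H) = F if and only if E(H) = E(F) ∪ E for some E ⊆ E*_F. -/

import Mathlib

open Finset
open scoped Classical

namespace CliqueSA

variable {k : ℕ}

/-- `C` is a vertex cover of the graph `H` on `[k]`. -/
def IsVC (H : SimpleGraph (Fin k)) (C : Finset (Fin k)) : Prop :=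
  ∀ ⦃u v : Fin k⦄, H.Adj u v → u ∈ C ∨ v ∈ C

/-- Minimum vertex cover size of a graph on `[k]`. -/
noncomputable def vc (H : SimpleGraph (Fin k)) : ℕ :=
  sInf {m | ∃ C : Finset (Fin k), IsVC H C ∧ C.card = m}

/-- The edges of a graph on `[k]` as a `Finset`. -/
noncomputable def edgeF (H : SimpleGraph (Fin k)) : Finset (Sym2 (Fin k)) :=
  Finset.univ.filter (fun e => e ∈ H.edgeSet)

/-- Restriction of `H` to the vertex subset `B` (vertex-induced subgraph, on the vertex set `[k]`). -/
def restrict (H : SimpleGraph (Fin k)) (B : Finset (Fin k)) : SimpleGraph (Fin k) where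
  Adj u v := H.Adj u v ∧ u ∈ B ∧ v ∈ B
  symm := ⟨by intro u v h; exact ⟨h.1.symm, h.2.2, h.2.1⟩⟩
  loopless := ⟨by intro u h; exact H.loopless.irrefl u h.1⟩

/-- The non-isolated vertices `V(E(H))` of a graph on `[k]`. -/
noncomputable def suppF (H : SimpleGraph (Fin k)) : Finset (Fin k) :=
  Finset.univ.filter (fun v => v ∈ H.support)

/-- `W` is a minimum vertex cover of `H`. -/
def IsMinVC (H : SimpleGraph (Fin k)) (W : Finset (Fin k)) : Prop :=
  IsVC H W ∧ W.card = vc H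

/-- There is a matching in `H` from `U` into `W` covering all of `U`. -/
def MatchableInto (H : SimpleGraph (Fin k)) (U W : Finset (Fin k)) : Prop :=
  ∃ f : Fin k → Fin k, Set.InjOn f ↑U ∧ ∀ u ∈ U, f u ∈ W ∧ H.Adj u (f u)

/-- `U ⊆ Avail` is maximal (w.r.t. inclusion) with a matching in `H` from `U` into `W`
covering `U`. -/
def MaximalMatched (H : SimpleGraph (Fin k)) (W Avail U : Finset (Fin k)) : Prop :=
  U ⊆ Avail ∧ MatchableInto H U W ∧
    ∀ U', U ⊂ U' → U' ⊆ Avail → ¬ MatchableInto H U' W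

/-- `F` is a core of `H`: a vertex-induced subgraph such that every minimum vertex cover of `F`
is a vertex cover of `H`. -/
def IsCore (F H : SimpleGraph (Fin k)) : Prop :=
  (∃ S : Finset (Fin k), F = restrict H S) ∧
    ∀ C : Finset (Fin k), IsVC F C → C.card = vc F → IsVC H C

/-- `H` is in the `(i,e)`-boundary: `vc(H) = i` and `vc(H ∪ {e}) = i + 1`. -/
def InBoundary (i : ℕ) (H : SimpleGraph (Fin k)) (e : Sym2 (Fin k)) : Prop :=
  vc H = i ∧ vc (H ⊔ SimpleGraph.fromEdgeSet {e}) = i + 1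

end CliqueSA

set_option maxHeartbeats 1000000

namespace CliqueSA

variable {k : ℕ}

/-! ### Basic facts about vertex covers -/

lemma isVC_univ (H : SimpleGraph (Fin k)) : IsVC H (univ : Finset (Fin k)) :=
  fun u _ _ => Or.inl (mem_univ u)

lemma exists_isMinVC (H : SimpleGraph (Fin k)) : ∃ C, IsMinVC H C := by
  have hne : {m | ∃ C : Finset (Fin k), IsVC H C ∧ C.card = m}.Nonempty :=
    ⟨(univ : Finset (Fin k)).card, ⟨univ, isVC_univ H, rfl⟩⟩
  obtain ⟨C, hC, hcard⟩ := Nat.sInf_mem hne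
  exact ⟨C, hC, hcard⟩

lemma vc_le_card {H : SimpleGraph (Fin k)} {C : Finset (Fin k)} (hC : IsVC H C) :
    vc H ≤ C.card :=
  Nat.sInf_le ⟨C, hC, rfl⟩

lemma mem_suppF {H : SimpleGraph (Fin k)} {v : Fin k} : v ∈ suppF H ↔ v ∈ H.support := by
  simp [suppF]

lemma minVC_subset_suppF {H : SimpleGraph (Fin k)} {C : Finset (Fin k)}
    (h1 : IsVC H C) (h2 : C.card = vc H) : C ⊆ suppF H := by
  intro x hx
  by_contra hxs
  have hVC : IsVC H (C.erase x) := by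
    intro u v huv
    have hux : u ≠ x := by rintro rfl; exact hxs (mem_suppF.2 ⟨v, huv⟩)
    have hvx : v ≠ x := by rintro rfl; exact hxs (mem_suppF.2 ⟨u, huv.symm⟩)
    rcases h1 huv with h | h
    · exact Or.inl (mem_erase.2 ⟨hux, h⟩)
    · exact Or.inr (mem_erase.2 ⟨hvx, h⟩)
  have hle := vc_le_card hVC
  rw [card_erase_of_mem hx] at hle
  have hpos : 0 < C.card := card_pos.2 ⟨x, hx⟩
  omega

/-! ### Matchings and Hall's theorem -/

def MatchN (N : Fin k → Finset (Fin k)) (U : Finset (Fin k)) : Prop :=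
  ∃ f : Fin k → Fin k, Set.InjOn f ↑U ∧ ∀ u ∈ U, f u ∈ N u

noncomputable def nbr (H : SimpleGraph (Fin k)) (W : Finset (Fin k)) (v : Fin k) :
    Finset (Fin k) :=
  W.filter (fun w => H.Adj v w)

lemma matchableInto_iff {H : SimpleGraph (Fin k)} {U W : Finset (Fin k)} :
    MatchableInto H U W ↔ MatchN (nbr H W) U := by
  unfold MatchableInto MatchN nbr
  constructor
  · rintro ⟨f, h1, h2⟩
    exact ⟨f, h1, fun u hu => mem_filter.2 ⟨(h2 u hu).1, (h2 u hu).2⟩⟩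
  · rintro ⟨f, h1, h2⟩
    exact ⟨f, h1, fun u hu => ⟨(mem_filter.1 (h2 u hu)).1, (mem_filter.1 (h2 u hu)).2⟩⟩

lemma MatchN.mono {N : Fin k → Finset (Fin k)} {U U' : Finset (Fin k)}
    (h : MatchN N U) (hsub : U' ⊆ U) : MatchN N U' := by
  obtain ⟨f, h1, h2⟩ := h
  exact ⟨f, h1.mono (coe_subset.2 hsub), fun u hu => h2 u (hsub hu)⟩

lemma matchableInto_mono {H : SimpleGraph (Fin k)} {U U' W : Finset (Fin k)}
    (h : MatchableInto H U W) (hsub : U' ⊆ U) : MatchableInto H U' W := by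
  rw [matchableInto_iff] at *
  exact h.mono hsub

lemma MatchN.congr {N N' : Fin k → Finset (Fin k)} {U : Finset (Fin k)}
    (h : MatchN N U) (he : ∀ u ∈ U, N u = N' u) : MatchN N' U := by
  obtain ⟨f, h1, h2⟩ := h
  exact ⟨f, h1, fun u hu => (he u hu) ▸ h2 u hu⟩

lemma matchN_iff_hall (N : Fin k → Finset (Fin k)) (U : Finset (Fin k)) :
    MatchN N U ↔ ∀ S ⊆ U, S.card ≤ (S.biUnion N).card := by
  constructor
  · rintro ⟨f, hinj, hf⟩ S hS
    have hcard : (S.image f).card = S.card := card_image_of_injOn (hinj.mono (coe_subset.2 hS))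
    rw [← hcard]
    apply card_le_card
    intro y hy
    obtain ⟨u, hu, rfl⟩ := mem_image.1 hy
    exact mem_biUnion.2 ⟨u, hu, hf u (hS hu)⟩
  · intro hall
    have key := (Finset.all_card_le_biUnion_card_iff_exists_injective
      (fun u : {x // x ∈ U} => N u.1)).1 ?_
    · obtain ⟨f, hinj, hf⟩ := key
      refine ⟨fun x => if h : x ∈ U then f ⟨x, h⟩ else x, ?_, ?_⟩
      · intro a ha b hb hab
        simp only [Finset.mem_coe] at ha hb
        simp only [dif_pos ha, dif_pos hb] at hab
        exact congrArg Subtype.val (hinj hab)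
      · intro u hu
        simp only [dif_pos hu]
        exact hf ⟨u, hu⟩
    · intro s
      have heq : (s.biUnion fun u => N u.1) = (s.image Subtype.val).biUnion N := by
        ext y; simp [mem_biUnion]
      rw [heq, ← card_image_of_injective s Subtype.val_injective]
      apply hall
      intro x hx
      obtain ⟨u, _, rfl⟩ := mem_image.1 hx
      exact u.2

lemma exists_tight {N : Fin k → Finset (Fin k)} {U : Finset (Fin k)} {v : Fin k}
    (hU : MatchN N U) (h : ¬ MatchN N (insert v U)) :
    ∃ S ⊆ U, (S.biUnion N).card = S.card ∧ N v ⊆ S.biUnion N := by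
  rw [matchN_iff_hall] at h
  push_neg at h
  obtain ⟨A, hA, hcard⟩ := h
  have hallU := (matchN_iff_hall N U).1 hU
  have hvA : v ∈ A := by
    by_contra hvA
    have hsub : A ⊆ U := fun x hx =>
      (mem_insert.1 (hA hx)).resolve_left (fun h' => hvA (h' ▸ hx))
    exact absurd (hallU A hsub) (not_le.2 hcard)
  set S := A.erase v with hSdef
  have hSU : S ⊆ U := by
    intro x hx
    obtain ⟨hxv, hxA⟩ := mem_erase.1 hx
    exact (mem_insert.1 (hA hxA)).resolve_left hxv
  have hAins : A = insert v S := by rw [hSdef, insert_erase hvA]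
  have hAcard : A.card = S.card + 1 := by
    rw [hAins, card_insert_of_notMem (notMem_erase v A)]
  have hbU : A.biUnion N = N v ∪ S.biUnion N := by rw [hAins, biUnion_insert]
  have h1 : S.card ≤ (S.biUnion N).card := hallU S hSU
  have h2 : S.biUnion N ⊆ A.biUnion N := by
    rw [hAins]; exact biUnion_subset_biUnion_of_subset_left N (subset_insert v S)
  have h3 : (A.biUnion N).card ≤ S.card := by omega
  have h4 : (S.biUnion N).card = S.card := le_antisymm (by
    calc (S.biUnion N).card ≤ (A.biUnion N).card := card_le_card h2
      _ ≤ S.card := h3) h1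
  have h5 : A.biUnion N = S.biUnion N := by
    apply (eq_of_subset_of_card_le h2 ?_).symm
    omega
  refine ⟨S, hSU, h4, ?_⟩
  rw [← h5, hbU]
  exact subset_union_left

lemma tight_union {N : Fin k → Finset (Fin k)} {U : Finset (Fin k)}
    (hall : ∀ S ⊆ U, S.card ≤ (S.biUnion N).card)
    {S T : Finset (Fin k)} (hS : S ⊆ U) (hT : T ⊆ U)
    (htS : (S.biUnion N).card = S.card) (htT : (T.biUnion N).card = T.card) :
    ((S ∪ T).biUnion N).card = (S ∪ T).card := by
  have h1 : (S ∪ T).biUnion N = S.biUnion N ∪ T.biUnion N := by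
    ext y
    simp only [mem_biUnion, mem_union]
    constructor
    · rintro ⟨x, hx | hx, hyx⟩
      · exact Or.inl ⟨x, hx, hyx⟩
      · exact Or.inr ⟨x, hx, hyx⟩
    · rintro (⟨x, hx, hyx⟩ | ⟨x, hx, hyx⟩)
      · exact ⟨x, Or.inl hx, hyx⟩
      · exact ⟨x, Or.inr hx, hyx⟩
  have h2 : (S ∩ T).biUnion N ⊆ S.biUnion N ∩ T.biUnion N := by
    intro y hy
    obtain ⟨x, hx, hyx⟩ := mem_biUnion.1 hy
    exact mem_inter.2 ⟨mem_biUnion.2 ⟨x, (mem_inter.1 hx).1, hyx⟩,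
      mem_biUnion.2 ⟨x, (mem_inter.1 hx).2, hyx⟩⟩
  have h3 := card_union_add_card_inter (S.biUnion N) (T.biUnion N)
  have h4 := card_union_add_card_inter S T
  have h5 := hall (S ∩ T) (fun x hx => hS (mem_inter.1 hx).1)
  have h6 := card_le_card h2
  have h7 := hall (S ∪ T) (union_subset hS hT)
  rw [h1] at h7 ⊢
  omega

lemma exists_tight_family {N : Fin k → Finset (Fin k)} {U : Finset (Fin k)}
    (hall : ∀ S ⊆ U, S.card ≤ (S.biUnion N).card) (A : Finset (Fin k))
    (h : ∀ w ∈ A, ∃ S ⊆ U, (S.biUnion N).card = S.card ∧ w ∈ S.biUnion N) :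
    ∃ S ⊆ U, (S.biUnion N).card = S.card ∧ A ⊆ S.biUnion N := by
  induction A using Finset.induction with
  | empty => exact ⟨∅, empty_subset _, by simp, by simp⟩
  | @insert w A hw ih =>
    obtain ⟨S, hSU, hSt, hAS⟩ := ih (fun x hx => h x (mem_insert_of_mem hx))
    obtain ⟨T, hTU, hTt, hwT⟩ := h w (mem_insert_self w A)
    refine ⟨S ∪ T, union_subset hSU hTU, tight_union hall hSU hTU hSt hTt, ?_⟩
    have hsub : S.biUnion N ∪ T.biUnion N ⊆ (S ∪ T).biUnion N := by
      intro y hy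
      rcases mem_union.1 hy with hy | hy <;> obtain ⟨x, hx, hyx⟩ := mem_biUnion.1 hy
      · exact mem_biUnion.2 ⟨x, mem_union_left _ hx, hyx⟩
      · exact mem_biUnion.2 ⟨x, mem_union_right _ hx, hyx⟩
    intro x hx
    rcases mem_insert.1 hx with rfl | hx
    · exact hsub (mem_union_right _ hwT)
    · exact hsub (mem_union_left _ (hAS hx))

/-! ### The canonical minimum vertex cover -/

noncomputable def pick (p : Finset (Fin k) → Prop) : Finset (Fin k) :=
  if h : ∃ C, p C then h.choose else ∅

noncomputable def canonW (H : SimpleGraph (Fin k)) : Finset (Fin k) := pick (IsMinVC H)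

lemma canonW_spec (H : SimpleGraph (Fin k)) : IsMinVC H (canonW H) := by
  rw [canonW, pick, dif_pos (exists_isMinVC H)]
  exact (exists_isMinVC H).choose_spec

/-! ### The greedy maximal matchable set -/

noncomputable def gpref (H : SimpleGraph (Fin k)) (W Av : Finset (Fin k)) : ℕ → Finset (Fin k)
  | 0 => ∅
  | n + 1 =>
    let U := gpref H W Av n
    if hn : n < k then
      if (⟨n, hn⟩ : Fin k) ∈ Av ∧ MatchableInto H (insert ⟨n, hn⟩ U) W then
        insert (⟨n, hn⟩ : Fin k) U
      else U
    else U

noncomputable def greedy (H : SimpleGraph (Fin k)) (W Av : Finset (Fin k)) : Finset (Fin k) :=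
  gpref H W Av k

lemma gpref_succ_subset (H : SimpleGraph (Fin k)) (W Av : Finset (Fin k)) (n : ℕ) :
    gpref H W Av n ⊆ gpref H W Av (n + 1) := by
  intro x hx
  simp only [gpref]
  split
  · split
    · exact mem_insert_of_mem hx
    · exact hx
  · exact hx

lemma gpref_mono (H : SimpleGraph (Fin k)) (W Av : Finset (Fin k)) {m n : ℕ} (h : m ≤ n) :
    gpref H W Av m ⊆ gpref H W Av n := by
  induction n with
  | zero => simp_all
  | succ n ih =>
    rcases Nat.lt_or_ge m (n+1) with h' | h'
    · exact (ih (by omega)).trans (gpref_succ_subset H W Av n)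
    · have : m = n + 1 := by omega
      subst this; exact fun x hx => hx

lemma mem_gpref_lt {H : SimpleGraph (Fin k)} {W Av : Finset (Fin k)} {n : ℕ} {x : Fin k}
    (hx : x ∈ gpref H W Av n) : (x : ℕ) < n := by
  induction n with
  | zero => simp [gpref] at hx
  | succ n ih =>
    simp only [gpref] at hx
    split at hx
    · split at hx
      · rcases mem_insert.1 hx with rfl | hx
        · exact Nat.lt_succ_self n
        · exact Nat.lt_succ_of_lt (ih hx)
      · exact Nat.lt_succ_of_lt (ih hx)
    · exact Nat.lt_succ_of_lt (ih hx)

lemma gpref_subset_av {H : SimpleGraph (Fin k)} {W Av : Finset (Fin k)} {n : ℕ} :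
    gpref H W Av n ⊆ Av := by
  induction n with
  | zero => simp [gpref]
  | succ n ih =>
    intro x hx
    simp only [gpref] at hx
    split at hx
    · split at hx
      · rcases mem_insert.1 hx with rfl | hx
        · exact (by assumption : _ ∈ Av ∧ _).1
        · exact ih hx
      · exact ih hx
    · exact ih hx

lemma matchable_gpref (H : SimpleGraph (Fin k)) (W Av : Finset (Fin k)) (n : ℕ) :
    MatchableInto H (gpref H W Av n) W := by
  induction n with
  | zero => exact ⟨id, by simp [gpref], by simp [gpref]⟩
  | succ n ih =>
    simp only [gpref]
    split
    · split
      · exact (by assumption : _ ∧ MatchableInto H _ W).2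
      · exact ih
    · exact ih

lemma reject_of_not_mem_greedy {H : SimpleGraph (Fin k)} {W Av : Finset (Fin k)} {v : Fin k}
    (hAv : v ∈ Av) (hv : v ∉ greedy H W Av) :
    ¬ MatchableInto H (insert v (gpref H W Av (v : ℕ))) W := by
  intro hm
  apply hv
  have hlt : (v : ℕ) < k := v.2
  have hstep : v ∈ gpref H W Av ((v : ℕ) + 1) := by
    simp only [gpref]
    rw [dif_pos hlt]
    have hv' : (⟨(v : ℕ), hlt⟩ : Fin k) = v := by ext; rfl
    rw [hv', if_pos ⟨hAv, hm⟩]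
    exact mem_insert_self _ _
  exact gpref_mono H W Av (by omega) hstep

lemma reject_final {H : SimpleGraph (Fin k)} {W Av : Finset (Fin k)} {v : Fin k}
    (hAv : v ∈ Av) (hv : v ∉ greedy H W Av) :
    ¬ MatchableInto H (insert v (greedy H W Av)) W := by
  intro hm
  apply reject_of_not_mem_greedy hAv hv
  apply matchableInto_mono hm
  exact insert_subset_insert _ (gpref_mono H W Av (by omega))

/-! ### The core map -/

noncomputable def U1 (H : SimpleGraph (Fin k)) : Finset (Fin k) :=
  greedy H (canonW H) (univ \ canonW H)

noncomputable def U2 (H : SimpleGraph (Fin k)) : Finset (Fin k) :=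
  greedy H (canonW H) (univ \ (canonW H ∪ U1 H))

noncomputable def SHull (H : SimpleGraph (Fin k)) : Finset (Fin k) :=
  canonW H ∪ U1 H ∪ U2 H

noncomputable def coreMap (H : SimpleGraph (Fin k)) : SimpleGraph (Fin k) :=
  restrict H (SHull H)


lemma U1_av {H : SimpleGraph (Fin k)} : U1 H ⊆ univ \ canonW H := gpref_subset_av

lemma U2_av {H : SimpleGraph (Fin k)} : U2 H ⊆ univ \ (canonW H ∪ U1 H) := gpref_subset_av

lemma matchable_U1 (H : SimpleGraph (Fin k)) : MatchableInto H (U1 H) (canonW H) :=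
  matchable_gpref H _ _ k

lemma matchable_U2 (H : SimpleGraph (Fin k)) : MatchableInto H (U2 H) (canonW H) :=
  matchable_gpref H _ _ k

lemma U1_not_W {H : SimpleGraph (Fin k)} {x : Fin k} (hx : x ∈ U1 H) : x ∉ canonW H :=
  (mem_sdiff.1 (U1_av hx)).2

lemma U2_not_W {H : SimpleGraph (Fin k)} {x : Fin k} (hx : x ∈ U2 H) : x ∉ canonW H :=
  fun h => (mem_sdiff.1 (U2_av hx)).2 (mem_union_left _ h)

lemma U2_not_U1 {H : SimpleGraph (Fin k)} {x : Fin k} (hx : x ∈ U2 H) : x ∉ U1 H :=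
  fun h => (mem_sdiff.1 (U2_av hx)).2 (mem_union_right _ h)

lemma coreMap_adj {H : SimpleGraph (Fin k)} {u v : Fin k} :
    (coreMap H).Adj u v ↔ H.Adj u v ∧ u ∈ SHull H ∧ v ∈ SHull H := Iff.rfl

lemma not_mem_SHull {H : SimpleGraph (Fin k)} {v : Fin k} (hv : v ∉ SHull H) :
    v ∉ canonW H ∧ v ∉ U1 H ∧ v ∉ U2 H := by
  simp only [SHull, mem_union, not_or] at hv
  exact ⟨hv.1.1, hv.1.2, hv.2⟩

lemma tight_pair {H : SimpleGraph (Fin k)} {v : Fin k} (hv : v ∉ SHull H) :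
    ∃ S1 : Finset (Fin k), S1 ⊆ U1 H ∧ ∃ S2 : Finset (Fin k), S2 ⊆ U2 H ∧
      (S1.biUnion (nbr H (canonW H))).card = S1.card ∧
      (S2.biUnion (nbr H (canonW H))).card = S2.card ∧
      nbr H (canonW H) v ⊆ S1.biUnion (nbr H (canonW H)) ∧
      nbr H (canonW H) v ⊆ S2.biUnion (nbr H (canonW H)) := by
  obtain ⟨hW, hU1, hU2⟩ := not_mem_SHull hv
  have hAv1 : v ∈ univ \ canonW H := mem_sdiff.2 ⟨mem_univ v, hW⟩
  have hAv2 : v ∈ univ \ (canonW H ∪ U1 H) :=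
    mem_sdiff.2 ⟨mem_univ v, fun h => (mem_union.1 h).elim hW hU1⟩
  have hrej1 := reject_final hAv1 hU1
  have hrej2 := reject_final hAv2 hU2
  rw [matchableInto_iff] at hrej1 hrej2
  have hm1 := (matchableInto_iff).1 (matchable_U1 H)
  have hm2 := (matchableInto_iff).1 (matchable_U2 H)
  obtain ⟨S1, hS1U, hS1t, hS1n⟩ := exists_tight hm1 hrej1
  obtain ⟨S2, hS2U, hS2t, hS2n⟩ := exists_tight hm2 hrej2
  exact ⟨S1, hS1U, S2, hS2U, hS1t, hS2t, hS1n, hS2n⟩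

lemma coreMap_cover_aux {H : SimpleGraph (Fin k)} {C : Finset (Fin k)}
    (hC : IsVC (coreMap H) C) (hcard : C.card = vc (coreMap H))
    {u v : Fin k} (huv : H.Adj u v) (hvS : v ∉ SHull H) : u ∈ C := by
  classical
  set W := canonW H with hWdef
  have hWvc := canonW_spec H
  set N := nbr H W with hNdef
  have huW : u ∈ W := by
    rcases hWvc.1 huv with h | h
    · exact h
    · exact absurd h (not_mem_SHull hvS).1
  obtain ⟨S1, hS1U, S2, hS2U, hS1t, hS2t, hS1n, hS2n⟩ := tight_pair hvS
  set T1 := S1.biUnion N with hT1def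
  set T2 := S2.biUnion N with hT2def
  have hu_nbr : u ∈ N v := mem_filter.2 ⟨huW, huv.symm⟩
  have huT1 : u ∈ T1 := hS1n hu_nbr
  have huT2 : u ∈ T2 := hS2n hu_nbr
  by_contra huC
  -- the matchings
  obtain ⟨f1, hf1inj, hf1m⟩ := matchable_U1 H
  obtain ⟨f2, hf2inj, hf2m⟩ := matchable_U2 H
  have hf1inj' : Set.InjOn f1 ↑S1 := hf1inj.mono (coe_subset.2 hS1U)
  have hf2inj' : Set.InjOn f2 ↑S2 := hf2inj.mono (coe_subset.2 hS2U)
  have hf1mem : ∀ s ∈ S1, f1 s ∈ N s := fun s hs =>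
    mem_filter.2 ⟨(hf1m s (hS1U hs)).1, (hf1m s (hS1U hs)).2⟩
  have hf2mem : ∀ s ∈ S2, f2 s ∈ N s := fun s hs =>
    mem_filter.2 ⟨(hf2m s (hS2U hs)).1, (hf2m s (hS2U hs)).2⟩
  have himg1 : S1.image f1 = T1 := by
    apply eq_of_subset_of_card_le
    · intro y hy
      obtain ⟨s, hs, rfl⟩ := mem_image.1 hy
      exact mem_biUnion.2 ⟨s, hs, hf1mem s hs⟩
    · rw [card_image_of_injOn hf1inj']
      exact le_of_eq hS1t
  have himg2 : S2.image f2 = T2 := by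
    apply eq_of_subset_of_card_le
    · intro y hy
      obtain ⟨s, hs, rfl⟩ := mem_image.1 hy
      exact mem_biUnion.2 ⟨s, hs, hf2mem s hs⟩
    · rw [card_image_of_injOn hf2inj']
      exact le_of_eq hS2t
  -- membership facts
  have hWS : W ⊆ SHull H := fun x hx => mem_union_left _ (mem_union_left _ hx)
  have hU1S : U1 H ⊆ SHull H := fun x hx => mem_union_left _ (mem_union_right _ hx)
  have hU2S : U2 H ⊆ SHull H := fun x hx => mem_union_right _ hx
  have hT1W : T1 ⊆ W := by
    intro y hy
    obtain ⟨s, _, hys⟩ := mem_biUnion.1 hy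
    exact (mem_filter.1 hys).1
  have hT2W : T2 ⊆ W := by
    intro y hy
    obtain ⟨s, _, hys⟩ := mem_biUnion.1 hy
    exact (mem_filter.1 hys).1
  -- covered matching edges
  have hedge1 : ∀ s ∈ S1, (coreMap H).Adj s (f1 s) := by
    intro s hs
    exact coreMap_adj.2 ⟨(hf1m s (hS1U hs)).2, hU1S (hS1U hs), hWS (hf1m s (hS1U hs)).1⟩
  have hedge2 : ∀ s ∈ S2, (coreMap H).Adj s (f2 s) := by
    intro s hs
    exact coreMap_adj.2 ⟨(hf2m s (hS2U hs)).2, hU2S (hS2U hs), hWS (hf2m s (hS2U hs)).1⟩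
  set P1 := S1.filter (fun s => f1 s ∉ C) with hP1def
  set P2 := S2.filter (fun s => f2 s ∉ C ∧ f2 s ∉ T1) with hP2def
  have hP1C : P1 ⊆ C := by
    intro s hs
    obtain ⟨hsS, hsf⟩ := mem_filter.1 hs
    exact (hC (hedge1 s hsS)).resolve_right hsf
  have hP2C : P2 ⊆ C := by
    intro s hs
    obtain ⟨hsS, hsf⟩ := mem_filter.1 hs
    exact (hC (hedge2 s hsS)).resolve_right hsf.1
  have hP1card : P1.card = (T1 \ C).card := by
    rw [← card_image_of_injOn (hf1inj'.mono (coe_subset.2 (filter_subset _ _)))]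
    congr 1
    apply Finset.Subset.antisymm
    · intro y hy
      obtain ⟨s, hs, rfl⟩ := mem_image.1 hy
      obtain ⟨hsS, hsf⟩ := mem_filter.1 hs
      exact mem_sdiff.2 ⟨himg1 ▸ mem_image_of_mem f1 hsS, hsf⟩
    · intro y hy
      obtain ⟨hyT, hyC⟩ := mem_sdiff.1 hy
      obtain ⟨s, hs, rfl⟩ := mem_image.1 (himg1 ▸ hyT)
      exact mem_image_of_mem f1 (mem_filter.2 ⟨hs, hyC⟩)
  have hP2card : P2.card = ((T2 \ C) \ T1).card := by
    rw [← card_image_of_injOn (hf2inj'.mono (coe_subset.2 (filter_subset _ _)))]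
    congr 1
    apply Finset.Subset.antisymm
    · intro y hy
      obtain ⟨s, hs, rfl⟩ := mem_image.1 hy
      obtain ⟨hsS, hsf⟩ := mem_filter.1 hs
      exact mem_sdiff.2 ⟨mem_sdiff.2 ⟨himg2 ▸ mem_image_of_mem f2 hsS, hsf.1⟩, hsf.2⟩
    · intro y hy
      obtain ⟨hyT, hyT1⟩ := mem_sdiff.1 hy
      obtain ⟨hyT2, hyC⟩ := mem_sdiff.1 hyT
      obtain ⟨s, hs, rfl⟩ := mem_image.1 (himg2 ▸ hyT2)
      exact mem_image_of_mem f2 (mem_filter.2 ⟨hs, hyC, hyT1⟩)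
  -- the special vertex s₂
  obtain ⟨s₂, hs₂S, hs₂f⟩ := mem_image.1 (himg2 ▸ huT2)
  have hs₂C : s₂ ∈ C := (hC (hedge2 s₂ hs₂S)).resolve_right (hs₂f ▸ huC)
  have hs₂P2 : s₂ ∉ P2 := by
    intro h
    exact (mem_filter.1 h).2.2 (hs₂f ▸ huT1)
  have hS1S2 : Disjoint S1 S2 := by
    rw [disjoint_left]
    intro x hx1 hx2
    exact U2_not_U1 (hS2U hx2) (hS1U hx1)
  have hs₂P1 : s₂ ∉ P1 := by
    intro h
    exact (disjoint_left.1 hS1S2) (filter_subset _ _ h) hs₂S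
  -- the improved cover
  set C' := (C \ (S1 ∪ S2)) ∪ (T1 ∪ T2) with hC'def
  have hC'VC : IsVC (coreMap H) C' := by
    have key : ∀ x y : Fin k, (coreMap H).Adj x y → x ∈ C → x ∈ C' ∨ y ∈ C' := by
      intro x y hxy hxC
      by_cases hx12 : x ∈ S1 ∪ S2
      · right
        have hxW : x ∉ W := by
          rcases mem_union.1 hx12 with h | h
          · exact U1_not_W (hS1U h)
          · exact U2_not_W (hS2U h)
        have hyW : y ∈ W := (hWvc.1 (coreMap_adj.1 hxy).1).resolve_left hxW
        have hyN : y ∈ N x := mem_filter.2 ⟨hyW, (coreMap_adj.1 hxy).1⟩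
        rcases mem_union.1 hx12 with h | h
        · exact mem_union_right _ (mem_union_left _ (mem_biUnion.2 ⟨x, h, hyN⟩))
        · exact mem_union_right _ (mem_union_right _ (mem_biUnion.2 ⟨x, h, hyN⟩))
      · exact Or.inl (mem_union_left _ (mem_sdiff.2 ⟨hxC, hx12⟩))
    intro x y hxy
    rcases hC hxy with h | h
    · exact key x y hxy h
    · exact (key y x hxy.symm h).symm
  -- cardinality bound
  have hTW : T1 ∪ T2 ⊆ W := union_subset hT1W hT2W
  have hSW : ∀ x ∈ S1 ∪ S2, x ∉ W := by
    intro x hx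
    rcases mem_union.1 hx with h | h
    · exact U1_not_W (hS1U h)
    · exact U2_not_W (hS2U h)
  have hdisj : (T1 ∪ T2) \ (C \ (S1 ∪ S2)) = (T1 ∪ T2) \ C := by
    ext t
    simp only [mem_sdiff]
    constructor
    · rintro ⟨ht, htC⟩
      refine ⟨ht, fun hc => htC ⟨hc, fun hs => hSW t hs (hTW ht)⟩⟩
    · rintro ⟨ht, htC⟩
      exact ⟨ht, fun hc => htC hc.1⟩
  have hsplit : (T1 ∪ T2) \ C = (T1 \ C) ∪ ((T2 \ C) \ T1) := by
    ext t
    simp only [mem_sdiff, mem_union]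
    constructor
    · rintro ⟨ht | ht, htC⟩
      · exact Or.inl ⟨ht, htC⟩
      · by_cases ht1 : t ∈ T1
        · exact Or.inl ⟨ht1, htC⟩
        · exact Or.inr ⟨⟨ht, htC⟩, ht1⟩
    · rintro (⟨ht, htC⟩ | ⟨⟨ht, htC⟩, _⟩)
      · exact ⟨Or.inl ht, htC⟩
      · exact ⟨Or.inr ht, htC⟩
  have hsplitdisj : Disjoint (T1 \ C) ((T2 \ C) \ T1) := by
    rw [disjoint_left]
    intro t ht1 ht2
    exact (mem_sdiff.1 ht2).2 (mem_sdiff.1 ht1).1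
  have hcard1 : ((T1 ∪ T2) \ C).card = P1.card + P2.card := by
    rw [hsplit, card_union_of_disjoint hsplitdisj, hP1card, hP2card]
  -- P1 ∪ P2 ∪ {s₂} ⊆ C ∩ (S1 ∪ S2)
  have hPdisj : Disjoint P1 P2 :=
    hS1S2.mono (filter_subset _ _) (filter_subset _ _)
  have hbig : insert s₂ (P1 ∪ P2) ⊆ C ∩ (S1 ∪ S2) := by
    intro x hx
    rcases mem_insert.1 hx with rfl | hx
    · exact mem_inter.2 ⟨hs₂C, mem_union_right _ hs₂S⟩
    · rcases mem_union.1 hx with h | h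
      · exact mem_inter.2 ⟨hP1C h, mem_union_left _ (filter_subset _ _ h)⟩
      · exact mem_inter.2 ⟨hP2C h, mem_union_right _ (filter_subset _ _ h)⟩
  have hbigcard : P1.card + P2.card + 1 ≤ (C ∩ (S1 ∪ S2)).card := by
    have h1 : (insert s₂ (P1 ∪ P2)).card = P1.card + P2.card + 1 := by
      rw [card_insert_of_notMem (fun h => (mem_union.1 h).elim hs₂P1 hs₂P2),
        card_union_of_disjoint hPdisj]
    rw [← h1]
    exact card_le_card hbig
  have hCsplit : (C ∩ (S1 ∪ S2)).card + (C \ (S1 ∪ S2)).card = C.card :=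
    card_inter_add_card_sdiff C (S1 ∪ S2)
  have hC'le : C'.card ≤ (C \ (S1 ∪ S2)).card + ((T1 ∪ T2) \ C).card := by
    calc C'.card ≤ (C \ (S1 ∪ S2)).card + ((T1 ∪ T2) \ (C \ (S1 ∪ S2))).card := by
          rw [hC'def, ← union_sdiff_self_eq_union]
          exact card_union_le _ _
      _ = (C \ (S1 ∪ S2)).card + ((T1 ∪ T2) \ C).card := by rw [hdisj]
  have hvcle := vc_le_card hC'VC
  omega

lemma coreMap_cover {H : SimpleGraph (Fin k)} {C : Finset (Fin k)}
    (hC : IsVC (coreMap H) C) (hcard : C.card = vc (coreMap H)) : IsVC H C := by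
  intro a b hab
  by_cases hbS : b ∈ SHull H
  · by_cases haS : a ∈ SHull H
    · exact hC (coreMap_adj.2 ⟨hab, haS, hbS⟩)
    · exact Or.inr (coreMap_cover_aux hC hcard hab.symm haS)
  · exact Or.inl (coreMap_cover_aux hC hcard hab hbS)

lemma isCore_coreMap (H : SimpleGraph (Fin k)) : IsCore (coreMap H) H :=
  ⟨⟨SHull H, rfl⟩, fun _ h1 h2 => coreMap_cover h1 h2⟩


lemma coreMap_le (H : SimpleGraph (Fin k)) : coreMap H ≤ H := fun _ _ h => h.1

lemma coreMap_edgeSet_subset (H : SimpleGraph (Fin k)) :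
    (coreMap H).edgeSet ⊆ H.edgeSet :=
  SimpleGraph.edgeSet_mono (coreMap_le H)

lemma isVC_coreMap_W (H : SimpleGraph (Fin k)) : IsVC (coreMap H) (canonW H) :=
  fun _ _ h => (canonW_spec H).1 h.1

lemma vc_coreMap (H : SimpleGraph (Fin k)) : vc (coreMap H) = vc H := by
  apply le_antisymm
  · have := vc_le_card (isVC_coreMap_W H)
    rw [(canonW_spec H).2] at this
    exact this
  · obtain ⟨C, hC1, hC2⟩ := exists_isMinVC (coreMap H)
    have := vc_le_card (coreMap_cover hC1 hC2)
    omega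

lemma card_matchable_le {H : SimpleGraph (Fin k)} {U W : Finset (Fin k)}
    (h : MatchableInto H U W) : U.card ≤ W.card := by
  obtain ⟨f, hinj, hf⟩ := h
  exact card_le_card_of_injOn f (fun u hu => (hf u hu).1) hinj

lemma suppF_coreMap_subset (H : SimpleGraph (Fin k)) : suppF (coreMap H) ⊆ SHull H := by
  intro x hx
  obtain ⟨y, hy⟩ := mem_suppF.1 hx
  exact hy.2.1

lemma card_suppF_coreMap (H : SimpleGraph (Fin k)) :
    (suppF (coreMap H)).card ≤ 3 * vc (coreMap H) := by
  have h1 : (suppF (coreMap H)).card ≤ (SHull H).card :=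
    card_le_card (suppF_coreMap_subset H)
  have h2 : (SHull H).card ≤ (canonW H ∪ U1 H).card + (U2 H).card := card_union_le _ _
  have h3 : (canonW H ∪ U1 H).card ≤ (canonW H).card + (U1 H).card := card_union_le _ _
  have h4 := card_matchable_le (matchable_U1 H)
  have h5 := card_matchable_le (matchable_U2 H)
  have h6 := (canonW_spec H).2
  rw [vc_coreMap]
  omega

/-! ### The edge set `E*_F` -/

noncomputable def EStarSet (F : SimpleGraph (Fin k)) : Set (Sym2 (Fin k)) :=
  {e | ∃ H, coreMap H = F ∧ e ∈ H.edgeSet ∧ e ∉ F.edgeSet}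

lemma extra_edge_endpoints {H : SimpleGraph (Fin k)} {a b : Fin k}
    (hab : H.Adj a b) (hbS : b ∉ SHull H) :
    a ∈ suppF (coreMap H) ∧ b ∉ suppF (coreMap H) := by
  constructor
  · have haW : a ∈ canonW H := by
      rcases (canonW_spec H).1 hab with h | h
      · exact h
      · exact absurd h (not_mem_SHull hbS).1
    obtain ⟨S1, hS1U, _, _, _, _, hS1n, _⟩ := tight_pair hbS
    have ha_nbr : a ∈ nbr H (canonW H) b := mem_filter.2 ⟨haW, hab.symm⟩
    obtain ⟨s, hsS, has⟩ := mem_biUnion.1 (hS1n ha_nbr)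
    have hadj : (coreMap H).Adj s a := coreMap_adj.2 ⟨(mem_filter.1 has).2,
      mem_union_left _ (mem_union_right _ (hS1U hsS)),
      mem_union_left _ (mem_union_left _ haW)⟩
    exact mem_suppF.2 ⟨s, hadj.symm⟩
  · exact fun h => hbS (suppF_coreMap_subset H h)

lemma extra_edge_of_mem {H : SimpleGraph (Fin k)} {e : Sym2 (Fin k)}
    (he : e ∈ H.edgeSet) (hne : e ∉ (coreMap H).edgeSet) :
    ∃ u v : Fin k, e = s(u, v) ∧ H.Adj u v ∧ v ∉ SHull H := by
  induction e with
  | _ a b =>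
    rw [SimpleGraph.mem_edgeSet] at he hne
    by_cases hbS : b ∈ SHull H
    · by_cases haS : a ∈ SHull H
      · exact absurd (coreMap_adj.2 ⟨he, haS, hbS⟩) hne
      · exact ⟨b, a, Sym2.eq_swap, he.symm, haS⟩
    · exact ⟨a, b, rfl, he, hbS⟩

lemma EStarSet_spec {F : SimpleGraph (Fin k)} {e : Sym2 (Fin k)} (he : e ∈ EStarSet F) :
    ∃ u v : Fin k, u ∈ suppF F ∧ v ∉ suppF F ∧ e = s(u, v) ∧
      (∀ C : Finset (Fin k), IsVC F C → C.card = vc F → u ∈ C) := by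
  obtain ⟨H', hH', heH, heF⟩ := he
  subst hH'
  obtain ⟨u, v, rfl, huv, hvS⟩ := extra_edge_of_mem heH heF
  obtain ⟨hu, hv⟩ := extra_edge_endpoints huv hvS
  refine ⟨u, v, hu, hv, rfl, ?_⟩
  intro C hC1 hC2
  rcases coreMap_cover hC1 hC2 huv with h | h
  · exact h
  · exact absurd (minVC_subset_suppF hC1 hC2 h) hv

/-! ### The interval of graphs mapping to `F` -/

def Interval (F H : SimpleGraph (Fin k)) : Prop :=
  F.edgeSet ⊆ H.edgeSet ∧ H.edgeSet \ F.edgeSet ⊆ EStarSet F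

lemma interval_self {H : SimpleGraph (Fin k)} {F : SimpleGraph (Fin k)}
    (h : coreMap H = F) : Interval F H := by
  subst h
  exact ⟨coreMap_edgeSet_subset H, fun e he => ⟨H, rfl, he.1, he.2⟩⟩

lemma Interval.le {F H : SimpleGraph (Fin k)} (hI : Interval F H) : F ≤ H := by
  intro a b hab
  exact (H.mem_edgeSet).1 (hI.1 ((F.mem_edgeSet).2 hab))

lemma Interval.extra {F H : SimpleGraph (Fin k)} (hI : Interval F H) {a b : Fin k}
    (hab : H.Adj a b) (hnab : ¬ F.Adj a b) :
    ∃ u v : Fin k, s(a, b) = s(u, v) ∧ u ∈ suppF F ∧ v ∉ suppF F ∧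
      (∀ C : Finset (Fin k), IsVC F C → C.card = vc F → u ∈ C) := by
  have he : s(a, b) ∈ EStarSet F := hI.2 ⟨(H.mem_edgeSet).2 hab,
    fun h => hnab ((F.mem_edgeSet).1 h)⟩
  obtain ⟨u, v, hu, hv, heq, hforce⟩ := EStarSet_spec he
  exact ⟨u, v, heq, hu, hv, hforce⟩

lemma Interval.minVC_cover {F H : SimpleGraph (Fin k)} (hI : Interval F H)
    {C : Finset (Fin k)} (hC1 : IsVC F C) (hC2 : C.card = vc F) : IsVC H C := by
  intro a b hab
  by_cases hF : F.Adj a b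
  · exact hC1 hF
  · obtain ⟨u, v, heq, hu, hv, hforce⟩ := hI.extra hab hF
    rcases Sym2.eq_iff.1 heq with ⟨rfl, rfl⟩ | ⟨rfl, rfl⟩
    · exact Or.inl (hforce C hC1 hC2)
    · exact Or.inr (hforce C hC1 hC2)

lemma Interval.vc_eq {F H : SimpleGraph (Fin k)} (hI : Interval F H) : vc H = vc F := by
  apply le_antisymm
  · obtain ⟨C, hC1, hC2⟩ := exists_isMinVC F
    have := vc_le_card (hI.minVC_cover hC1 hC2)
    omega
  · obtain ⟨C, hC1, hC2⟩ := exists_isMinVC H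
    have hCF : IsVC F C := fun a b hab => hC1 (hI.le hab)
    have := vc_le_card hCF
    omega

lemma Interval.isMinVC_eq {F H : SimpleGraph (Fin k)} (hI : Interval F H) :
    IsMinVC H = IsMinVC F := by
  funext C
  apply propext
  constructor
  · rintro ⟨h1, h2⟩
    have hCF : IsVC F C := fun a b hab => h1 (hI.le hab)
    refine ⟨hCF, le_antisymm ?_ (vc_le_card hCF)⟩
    rw [← hI.vc_eq, ← h2]
  · rintro ⟨h1, h2⟩
    have hCH : IsVC H C := hI.minVC_cover h1 h2
    refine ⟨hCH, ?_⟩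
    rw [hI.vc_eq, h2]

lemma Interval.canonW_eq {F H : SimpleGraph (Fin k)} (hI : Interval F H) :
    canonW H = canonW F := by
  unfold canonW
  rw [hI.isMinVC_eq]

lemma canonW_subset_suppF (F : SimpleGraph (Fin k)) : canonW F ⊆ suppF F :=
  minVC_subset_suppF (canonW_spec F).1 (canonW_spec F).2

lemma Interval.adj_eq {F H : SimpleGraph (Fin k)} (hI : Interval F H) {x : Fin k}
    (hx : x ∈ suppF F) (hxW : x ∉ canonW F) : ∀ y, H.Adj x y ↔ F.Adj x y := by
  intro y
  constructor
  · intro h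
    by_contra hF
    obtain ⟨u, v, heq, hu, hv, hforce⟩ := hI.extra h hF
    have huW : u ∈ canonW F := hforce _ (canonW_spec F).1 (canonW_spec F).2
    rcases Sym2.eq_iff.1 heq with ⟨rfl, rfl⟩ | ⟨rfl, rfl⟩
    · exact hxW huW
    · exact hv hx
  · exact fun h => hI.le h

lemma Interval.nbr_eq {F H : SimpleGraph (Fin k)} (hI : Interval F H) {x : Fin k}
    (hx : x ∈ suppF F) (hxW : x ∉ canonW F) (W' : Finset (Fin k)) :
    nbr H W' x = nbr F W' x := by
  unfold nbr
  apply filter_congr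
  intro y _
  simp only [hI.adj_eq hx hxW y]

lemma gpref_subset_suppF (G : SimpleGraph (Fin k)) (W Av : Finset (Fin k)) (n : ℕ) :
    gpref G W Av n ⊆ suppF G := by
  intro x hx
  obtain ⟨f, _, hf⟩ := matchable_gpref G W Av n
  exact mem_suppF.2 ⟨f x, (hf x hx).2⟩


lemma gpref_succ_lt (H : SimpleGraph (Fin k)) (W Av : Finset (Fin k)) {n : ℕ} (hn : n < k) :
    gpref H W Av (n + 1) =
      if (⟨n, hn⟩ : Fin k) ∈ Av ∧ MatchableInto H (insert ⟨n, hn⟩ (gpref H W Av n)) W then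
        insert (⟨n, hn⟩ : Fin k) (gpref H W Av n)
      else gpref H W Av n := by
  simp only [gpref, dif_pos hn]

lemma gpref_succ_ge (H : SimpleGraph (Fin k)) (W Av : Finset (Fin k)) {n : ℕ} (hn : ¬ n < k) :
    gpref H W Av (n + 1) = gpref H W Av n := by
  simp only [gpref, dif_neg hn]

lemma phase_eq (F : SimpleGraph (Fin k)) (Av : Finset (Fin k))
    (hAvW : ∀ x ∈ Av, x ∉ canonW F)
    (hout : ∀ H' : SimpleGraph (Fin k), coreMap H' = F →
        ∀ v w' : Fin k, v ∉ suppF F → H'.Adj v w' → w' ∈ canonW F →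
        v ∉ greedy H' (canonW F) Av) :
    ∀ n, ∀ H : SimpleGraph (Fin k), Interval F H →
      gpref H (canonW F) Av n = gpref F (canonW F) Av n := by
  intro n
  induction n with
  | zero => intro H _; rfl
  | succ n ih =>
    intro H hI
    by_cases hn : n < k
    · set W := canonW F with hWdef
      set v : Fin k := ⟨n, hn⟩ with hvdef
      set U := gpref F W Av n with hUdef
      have hU_H : gpref H W Av n = U := ih H hI
      have hUAv : U ⊆ Av := gpref_subset_av
      have hUsupp : U ⊆ suppF F := gpref_subset_suppF F W Av n
      have hUW : ∀ x ∈ U, x ∉ W := fun x hx => hAvW x (hUAv hx)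
      have hUm : MatchableInto F U W := matchable_gpref F W Av n
      have hUnbr : ∀ x ∈ U, nbr H W x = nbr F W x :=
        fun x hx => hI.nbr_eq (hUsupp hx) (hUW x hx) W
      rw [gpref_succ_lt H W Av hn, gpref_succ_lt F W Av hn, hU_H, ← hUdef, ← hvdef]
      by_cases hvAv : v ∈ Av
      · have hdec : MatchableInto H (insert v U) W ↔ MatchableInto F (insert v U) W := by
          have hvW : v ∉ W := hAvW v hvAv
          by_cases hvsupp : v ∈ suppF F
          · rw [matchableInto_iff, matchableInto_iff]
            constructor
            · intro h
              apply h.congr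
              intro x hx
              rcases mem_insert.1 hx with rfl | hx
              · exact hI.nbr_eq hvsupp hvW W
              · exact hUnbr x hx
            · intro h
              apply h.congr
              intro x hx
              rcases mem_insert.1 hx with rfl | hx
              · exact (hI.nbr_eq hvsupp hvW W).symm
              · exact (hUnbr x hx).symm
          · -- v is outside the support of F
            have hvU : v ∉ U := fun h => hvsupp (hUsupp h)
            constructor
            · intro hmatch
              exfalso
              -- build a tight obstruction
              have hallF : ∀ S ⊆ U, S.card ≤ (S.biUnion (nbr F W)).card :=
                (matchN_iff_hall _ _).1 (matchableInto_iff.1 hUm)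
              have claim : ∀ w' ∈ nbr H W v, ∃ S ⊆ U,
                  (S.biUnion (nbr F W)).card = S.card ∧ w' ∈ S.biUnion (nbr F W) := by
                intro w' hw'
                have hw'W : w' ∈ W := (mem_filter.1 hw').1
                have hadj : H.Adj v w' := (mem_filter.1 hw').2
                have hnF : ¬ F.Adj v w' := fun h => hvsupp (mem_suppF.2 ⟨w', h⟩)
                have he : s(v, w') ∈ EStarSet F := hI.2 ⟨(H.mem_edgeSet).2 hadj,
                  fun h => hnF ((F.mem_edgeSet).1 h)⟩
                obtain ⟨H', hH'core, heH', heF'⟩ := he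
                have hI' : Interval F H' := interval_self hH'core
                have hH'adj : H'.Adj v w' := (H'.mem_edgeSet).1 heH'
                have hvout : v ∉ greedy H' W Av := hout H' hH'core v w' hvsupp hH'adj hw'W
                have hrej := reject_of_not_mem_greedy hvAv hvout
                have hpref : gpref H' W Av ((v : ℕ)) = U := ih H' hI'
                rw [hpref] at hrej
                -- mixed neighbourhood family
                set Nmix : Fin k → Finset (Fin k) :=
                  fun x => if x = v then nbr H' W v else nbr F W x with hNmix
                have hnev : ∀ x ∈ U, Nmix x = nbr F W x := by
                  intro x hx
                  have : x ≠ v := fun h => hvU (h ▸ hx)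
                  simp only [hNmix, if_neg this]
                have hUm' : MatchN Nmix U :=
                  (matchableInto_iff.1 hUm).congr (fun u hu => (hnev u hu).symm)
                have hnot : ¬ MatchN Nmix (insert v U) := by
                  intro h
                  apply hrej
                  rw [matchableInto_iff]
                  apply h.congr
                  intro x hx
                  rcases mem_insert.1 hx with rfl | hx
                  · simp only [hNmix, if_pos rfl]
                  · rw [hnev x hx, hI'.nbr_eq (hUsupp hx) (hUW x hx) W]
                obtain ⟨S, hSU, hSt, hSn⟩ := exists_tight hUm' hnot
                have hbiu : S.biUnion Nmix = S.biUnion (nbr F W) :=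
                  biUnion_congr rfl (fun x hx => hnev x (hSU hx))
                refine ⟨S, hSU, by rw [← hbiu]; exact hSt, ?_⟩
                rw [← hbiu]
                apply hSn
                simp only [hNmix, if_pos rfl]
                exact mem_filter.2 ⟨hw'W, hH'adj⟩
              obtain ⟨Sx, hSxU, hSxt, hAsub⟩ :=
                exists_tight_family hallF (nbr H W v) claim
              have hm : MatchN (nbr H W) (insert v Sx) :=
                (matchableInto_iff.1 hmatch).mono (insert_subset_insert _ hSxU)
              have hhall := (matchN_iff_hall _ _).1 hm (insert v Sx) (fun x hx => hx)
              have hvSx : v ∉ Sx := fun h => hvU (hSxU h)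
              have hbi : (insert v Sx).biUnion (nbr H W) =
                  nbr H W v ∪ Sx.biUnion (nbr F W) := by
                rw [biUnion_insert]
                congr 1
                exact biUnion_congr rfl (fun x hx => hUnbr x (hSxU hx))
              rw [hbi, card_insert_of_notMem hvSx] at hhall
              have hunion : nbr H W v ∪ Sx.biUnion (nbr F W) = Sx.biUnion (nbr F W) :=
                union_eq_right.2 hAsub
              rw [hunion, hSxt] at hhall
              omega
            · intro hmatch
              exfalso
              obtain ⟨f, _, hf⟩ := hmatch
              have := (hf v (mem_insert_self v U)).2
              exact hvsupp (mem_suppF.2 ⟨f v, this⟩)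
        by_cases hc : MatchableInto F (insert v U) W
        · rw [if_pos ⟨hvAv, hdec.2 hc⟩, if_pos ⟨hvAv, hc⟩]
        · rw [if_neg (fun h => hc (hdec.1 h.2)), if_neg (fun h => hc h.2)]
      · rw [if_neg (fun h => hvAv h.1), if_neg (fun h => hvAv h.1)]
    · rw [gpref_succ_ge H _ Av hn, gpref_succ_ge F _ Av hn]
      exact ih H hI

lemma U1_eq_of_interval {F H : SimpleGraph (Fin k)} (hI : Interval F H) : U1 H = U1 F := by
  have hout : ∀ H' : SimpleGraph (Fin k), coreMap H' = F →
      ∀ v w' : Fin k, v ∉ suppF F → H'.Adj v w' → w' ∈ canonW F →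
      v ∉ greedy H' (canonW F) (univ \ canonW F) := by
    intro H' hcore v w' hvs hadj hw'
    have hI' : Interval F H' := interval_self hcore
    rw [← hI'.canonW_eq]
    intro hmem
    have hvS : v ∈ SHull H' := mem_union_left _ (mem_union_right _ hmem)
    have hwS : w' ∈ SHull H' := by
      rw [hI'.canonW_eq] at *
      exact mem_union_left _ (mem_union_left _ (hI'.canonW_eq ▸ hw'))
    have : F.Adj v w' := by
      rw [← hcore]
      exact coreMap_adj.2 ⟨hadj, hvS, hwS⟩
    exact hvs (mem_suppF.2 ⟨w', this⟩)
  have h := phase_eq F (univ \ canonW F) (fun x hx => (mem_sdiff.1 hx).2) hout k H hI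
  show greedy H (canonW H) (univ \ canonW H) = U1 F
  rw [hI.canonW_eq]
  exact h

lemma U2_eq_of_interval {F H : SimpleGraph (Fin k)} (hI : Interval F H) : U2 H = U2 F := by
  have hout : ∀ H' : SimpleGraph (Fin k), coreMap H' = F →
      ∀ v w' : Fin k, v ∉ suppF F → H'.Adj v w' → w' ∈ canonW F →
      v ∉ greedy H' (canonW F) (univ \ (canonW F ∪ U1 F)) := by
    intro H' hcore v w' hvs hadj hw'
    have hI' : Interval F H' := interval_self hcore
    have hgr : greedy H' (canonW F) (univ \ (canonW F ∪ U1 F)) = U2 H' := by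
      show _ = greedy H' (canonW H') (univ \ (canonW H' ∪ U1 H'))
      rw [hI'.canonW_eq, U1_eq_of_interval hI']
    rw [hgr]
    intro hmem
    have hvS : v ∈ SHull H' := mem_union_right _ hmem
    have hwS : w' ∈ SHull H' :=
      mem_union_left _ (mem_union_left _ (hI'.canonW_eq ▸ hw'))
    have : F.Adj v w' := by
      rw [← hcore]
      exact coreMap_adj.2 ⟨hadj, hvS, hwS⟩
    exact hvs (mem_suppF.2 ⟨w', this⟩)
  have h := phase_eq F (univ \ (canonW F ∪ U1 F))
    (fun x hx => fun hc => (mem_sdiff.1 hx).2 (mem_union_left _ hc)) hout k H hI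
  show greedy H (canonW H) (univ \ (canonW H ∪ U1 H)) = U2 F
  rw [hI.canonW_eq, U1_eq_of_interval hI]
  exact h

lemma SHull_eq_of_interval {F H : SimpleGraph (Fin k)} (hI : Interval F H) :
    SHull H = canonW F ∪ U1 F ∪ U2 F := by
  rw [SHull, hI.canonW_eq, U1_eq_of_interval hI, U2_eq_of_interval hI]

lemma SF_subset_suppF (F : SimpleGraph (Fin k)) :
    canonW F ∪ U1 F ∪ U2 F ⊆ suppF F := by
  apply union_subset (union_subset (canonW_subset_suppF F) ?_) ?_
  · exact gpref_subset_suppF F _ _ k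
  · exact gpref_subset_suppF F _ _ k

lemma coreMap_eq_of_interval {F H : SimpleGraph (Fin k)} (hI : Interval F H)
    (hFim : ∃ H₀, coreMap H₀ = F) : coreMap H = F := by
  obtain ⟨H₀, h₀⟩ := hFim
  have hI₀ : Interval F H₀ := interval_self h₀
  have hS : SHull H = SHull H₀ := by
    rw [SHull_eq_of_interval hI, SHull_eq_of_interval hI₀]
  ext a b
  constructor
  · rintro ⟨hH, haS, hbS⟩
    by_contra hF
    obtain ⟨u, v, heq, hu, hv, _⟩ := hI.extra hH hF
    have hsupp : ∀ x, x ∈ SHull H → x ∈ suppF F := by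
      intro x hx
      rw [SHull_eq_of_interval hI] at hx
      exact SF_subset_suppF F hx
    rcases Sym2.eq_iff.1 heq with ⟨rfl, rfl⟩ | ⟨rfl, rfl⟩
    · exact hv (hsupp b hbS)
    · exact hv (hsupp a haS)
  · intro hF
    have hadj : (restrict H₀ (SHull H₀)).Adj a b := by rw [← coreMap, h₀]; exact hF
    obtain ⟨_, haS, hbS⟩ := hadj
    exact ⟨hI.le hF, hS ▸ haS, hS ▸ hbS⟩



/-- Theorem `lem:compression`: there is a map `core` sending each graph `H` on
`[k]` to a core of `H` such that every `F` in the image satisfies `|V(E(F))| ≤ 3·vc(F)`, and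
there is an edge set `E*_F` consisting of pairs with exactly one endpoint in `V(E(F))` such that
`core(H) = F` iff `E(H) = E(F) ∪ E` for some `E ⊆ E*_F`. -/
theorem exists_core_map (k : ℕ) :
    ∃ core : SimpleGraph (Fin k) → SimpleGraph (Fin k),
      (∀ H, IsCore (core H) H) ∧
      (∀ F, (∃ H, core H = F) → (suppF F).card ≤ 3 * vc F) ∧
      (∀ F, (∃ H, core H = F) →
        ∃ EStar : Set (Sym2 (Fin k)),
          (∀ e ∈ EStar, ∃ u v : Fin k, u ∈ suppF F ∧ v ∉ suppF F ∧ e = s(u, v)) ∧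
          (∀ H : SimpleGraph (Fin k),
            core H = F ↔ F.edgeSet ⊆ H.edgeSet ∧ H.edgeSet \ F.edgeSet ⊆ EStar)) := by
  refine ⟨coreMap, fun H => isCore_coreMap H, ?_, ?_⟩
  · rintro F ⟨H, rfl⟩
    exact card_suppF_coreMap H
  · rintro F ⟨H₀, h₀⟩
    refine ⟨EStarSet F, ?_, ?_⟩
    · intro e he
      obtain ⟨u, v, hu, hv, heq, _⟩ := EStarSet_spec he
      exact ⟨u, v, hu, hv, heq⟩
    · intro H
      constructor
      · intro hcore
        exact ⟨hcore ▸ coreMap_edgeSet_subset H, fun e he => ⟨H, hcore, he.1, he.2⟩⟩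
      · rintro ⟨h1, h2⟩
        exact coreMap_eq_of_interval ⟨h1, h2⟩ ⟨H₀, h₀⟩

end CliqueSA
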